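/- Let α > 0 and define the real sequence y_0 = 3, y_{t+1} = y_t − 2α·tanh(y_t)/cosh(y_t)^2. Then for every natural number t with t ≤ 3·e^3/(16α), one has y_t ≥ 3/2. (Each step can decrease y by at most 8α·e^{−3} as long as y ≥ 3/2, so at least 3e^3/(16α) steps are needed to descend from 3 to 3/2.) -/

import Mathlib

lemma grad_nonneg (x : ℝ) (hx : 0 ≤ x) :
    0 ≤ 2 * Real.tanh x / Real.cosh x ^ 2 := by
  apply div_nonneg
  · have : 0 ≤ Real.tanh x := by
      rw [Real.tanh_eq_sinh_div_cosh]
      exact div_nonneg (Real.sinh_nonneg_iff.2 hx) (Real.cosh_pos x).le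
    linarith
  · positivity

lemma grad_bound (x : ℝ) (hx : (3:ℝ)/2 ≤ x) :
    2 * Real.tanh x / Real.cosh x ^ 2 ≤ 8 * Real.exp (-3) := by
  have hE : 0 < Real.exp x := Real.exp_pos x
  have hc : Real.exp x / 2 ≤ Real.cosh x := by
    rw [Real.cosh_eq]
    have := (Real.exp_pos (-x)).le
    linarith
  have hs : 2 * Real.sinh x ≤ Real.exp x := by
    rw [Real.sinh_eq]
    have := (Real.exp_pos (-x)).le
    linarith
  have hcp : 0 < Real.cosh x := Real.cosh_pos x
  have h1 : 2 * Real.tanh x / Real.cosh x ^ 2 ≤ 8 * Real.exp (-(2*x)) := by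
    have e : 2 * Real.tanh x / Real.cosh x ^ 2 = 2 * Real.sinh x / Real.cosh x ^ 3 := by
      rw [Real.tanh_eq_sinh_div_cosh]; field_simp
    rw [e, div_le_iff₀ (by positivity)]
    have hexp : Real.exp (-(2*x)) * Real.exp x ^ 3 = Real.exp x := by
      rw [← Real.exp_nat_mul, ← Real.exp_add]; norm_num; ring_nf
    nlinarith [pow_le_pow_left₀ (by positivity : (0:ℝ) ≤ Real.exp x / 2) hc 3,
      mul_pos hE hE, Real.exp_pos (-(2*x)), sq_nonneg (Real.exp x)]
  have h2 : Real.exp (-(2*x)) ≤ Real.exp (-3) :=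
    Real.exp_le_exp.2 (by linarith)
  linarith

theorem stmt4 (α : ℝ) (hα : 0 < α) (y : ℕ → ℝ)
    (h0 : y 0 = 3)
    (hrec : ∀ t, y (t + 1) = y t - 2 * α * Real.tanh (y t) / Real.cosh (y t) ^ 2) :
    ∀ t : ℕ, (t : ℝ) ≤ 3 * Real.exp 3 / (16 * α) → 3 / 2 ≤ y t := by
  have key : ∀ t : ℕ, (t : ℝ) ≤ 3 * Real.exp 3 / (16 * α) →
      3 - 8 * α * Real.exp (-3) * t ≤ y t := by
    intro t
    induction t with
    | zero => intro _; simp [h0]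
    | succ n ih =>
      intro ht
      have hn : (n : ℝ) ≤ 3 * Real.exp 3 / (16 * α) := by
        have : (n:ℝ) ≤ (n:ℝ) + 1 := by linarith
        push_cast at ht ⊢; linarith
      have hyn := ih hn
      have hlow : (3:ℝ)/2 ≤ y n := by
        have h1 : 8 * α * Real.exp (-3) * n ≤ 8 * α * Real.exp (-3) * (3 * Real.exp 3 / (16 * α)) := by
          apply mul_le_mul_of_nonneg_left hn (by positivity)
        have h2 : 8 * α * Real.exp (-3) * (3 * Real.exp 3 / (16 * α)) = 3/2 := by
          rw [Real.exp_neg]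
          field_simp
          ring
        linarith
      have hg1 := grad_nonneg (y n) (by linarith)
      have hg2 := grad_bound (y n) hlow
      have := hrec n
      have hstep : y n - 2 * α * Real.tanh (y n) / Real.cosh (y n) ^ 2 ≥
          y n - α * (8 * Real.exp (-3)) := by
        have e : 2 * α * Real.tanh (y n) / Real.cosh (y n) ^ 2
            = α * (2 * Real.tanh (y n) / Real.cosh (y n) ^ 2) := by ring
        rw [e]
        have := mul_le_mul_of_nonneg_left hg2 hα.le
        linarith
      push_cast
      rw [hrec n]
      push_cast at hyn
      nlinarith
  intro t ht
  have h1 := key t ht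
  have h2 : 8 * α * Real.exp (-3) * t ≤ 8 * α * Real.exp (-3) * (3 * Real.exp 3 / (16 * α)) :=
    mul_le_mul_of_nonneg_left ht (by positivity)
  have h3 : 8 * α * Real.exp (-3) * (3 * Real.exp 3 / (16 * α)) = 3/2 := by
    rw [Real.exp_neg]; field_simp; ring
  linarith
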